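/- For a group g with base rate p = Pr[y=1 | a=g], false positive rate FPR = Pr[δ=1 | y=0, a=g], false negative rate FNR = Pr[δ=0 | y=1, a=g], and positive predictive value PPV = Pr[y=1 | δ=1, a=g], the following identity holds: FPR = (p/(1-p)) · ((1-PPV)/PPV) · (1 - FNR), provided 0 < p < 1, PPV > 0, and Pr[δ=1 | a=g] > 0. -/

import Mathlib

open scoped Classical

noncomputable def pr {Ω : Type*} [Fintype Ω] (P : Ω → ℝ) (A : Ω → Prop) : ℝ :=
  ∑ ω, if A ω then P ω else 0

noncomputable def cpr {Ω : Type*} [Fintype Ω] (P : Ω → ℝ) (A B : Ω → Prop) : ℝ :=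
  pr P (fun ω => A ω ∧ B ω) / pr P B

lemma pr_congr {Ω : Type*} [Fintype Ω] (P : Ω → ℝ) {A B : Ω → Prop}
    (h : ∀ ω, A ω ↔ B ω) : pr P A = pr P B := by
  unfold pr
  refine Finset.sum_congr rfl fun ω _ => ?_
  simp [h ω]

lemma pr_split {Ω : Type*} [Fintype Ω] (P : Ω → ℝ) (b : Ω → Bool) (A : Ω → Prop) :
    pr P A = pr P (fun ω => b ω = true ∧ A ω) + pr P (fun ω => b ω = false ∧ A ω) := by
  unfold pr
  rw [← Finset.sum_add_distrib]
  refine Finset.sum_congr rfl fun ω _ => ?_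
  cases hb : b ω <;> simp [hb]

lemma pr_nonneg {Ω : Type*} [Fintype Ω] {P : Ω → ℝ} (hP : ∀ ω, 0 ≤ P ω) (A : Ω → Prop) :
    0 ≤ pr P A := by
  apply Finset.sum_nonneg
  intro ω _
  split <;> [exact hP ω; rfl]

/-- Chouldechova's identity: FPR = (p/(1-p)) · ((1-PPV)/PPV) · (1-FNR) within a group. -/
theorem stmt_1 {Ω : Type*} [Fintype Ω] (P : Ω → ℝ) (y δ : Ω → Bool) (a : Ω → Bool) (g : Bool)
    (hP : ∀ ω, 0 ≤ P ω) (hsum : ∑ ω, P ω = 1)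
    (hy1 : 0 < pr P (fun ω => y ω = true ∧ a ω = g))
    (hy0 : 0 < pr P (fun ω => y ω = false ∧ a ω = g))
    (hδ1 : 0 < pr P (fun ω => δ ω = true ∧ a ω = g))
    (hg : 0 < pr P (fun ω => a ω = g))
    (hp0 : 0 < cpr P (fun ω => y ω = true) (fun ω => a ω = g))
    (hp1 : cpr P (fun ω => y ω = true) (fun ω => a ω = g) < 1)
    (hPPV : 0 < cpr P (fun ω => y ω = true) (fun ω => δ ω = true ∧ a ω = g)) :
    cpr P (fun ω => δ ω = true) (fun ω => y ω = false ∧ a ω = g)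
      = (cpr P (fun ω => y ω = true) (fun ω => a ω = g)
          / (1 - cpr P (fun ω => y ω = true) (fun ω => a ω = g)))
        * ((1 - cpr P (fun ω => y ω = true) (fun ω => δ ω = true ∧ a ω = g))
            / cpr P (fun ω => y ω = true) (fun ω => δ ω = true ∧ a ω = g))
        * (1 - cpr P (fun ω => δ ω = false) (fun ω => y ω = true ∧ a ω = g)) := by
  set A := pr P (fun ω => y ω = true ∧ δ ω = true ∧ a ω = g) with hA
  set B := pr P (fun ω => y ω = true ∧ δ ω = false ∧ a ω = g) with hB
  set C := pr P (fun ω => y ω = false ∧ δ ω = true ∧ a ω = g) with hC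
  set D := pr P (fun ω => y ω = false ∧ δ ω = false ∧ a ω = g) with hD
  have e1 : pr P (fun ω => δ ω = true ∧ y ω = false ∧ a ω = g) = C :=
    pr_congr P (by tauto)
  have e3 : pr P (fun ω => y ω = true ∧ δ ω = true ∧ a ω = g) = A := rfl
  have e5 : pr P (fun ω => δ ω = false ∧ y ω = true ∧ a ω = g) = B :=
    pr_congr P (by tauto)
  have e2 : pr P (fun ω => y ω = false ∧ a ω = g) = C + D := by
    have h := pr_split P δ (fun ω => y ω = false ∧ a ω = g)
    have h1 : pr P (fun ω => δ ω = true ∧ y ω = false ∧ a ω = g) = C := pr_congr P (by tauto)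
    have h2 : pr P (fun ω => δ ω = false ∧ y ω = false ∧ a ω = g) = D := pr_congr P (by tauto)
    rw [h1, h2] at h; exact h
  have e4 : pr P (fun ω => δ ω = true ∧ a ω = g) = A + C := by
    have h := pr_split P y (fun ω => δ ω = true ∧ a ω = g)
    have h1 : pr P (fun ω => y ω = true ∧ δ ω = true ∧ a ω = g) = A := rfl
    have h2 : pr P (fun ω => y ω = false ∧ δ ω = true ∧ a ω = g) = C := rfl
    rw [h1, h2] at h; exact h
  have e6 : pr P (fun ω => y ω = true ∧ a ω = g) = A + B := by
    have h := pr_split P δ (fun ω => y ω = true ∧ a ω = g)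
    have h1 : pr P (fun ω => δ ω = true ∧ y ω = true ∧ a ω = g) = A := pr_congr P (by tauto)
    have h2 : pr P (fun ω => δ ω = false ∧ y ω = true ∧ a ω = g) = B := pr_congr P (by tauto)
    rw [h1, h2] at h; exact h
  have e7 : pr P (fun ω => a ω = g) = (A + B) + (C + D) := by
    have h := pr_split P y (fun ω => a ω = g)
    have h1 : pr P (fun ω => y ω = true ∧ a ω = g) = A + B := e6
    have h2 : pr P (fun ω => y ω = false ∧ a ω = g) = C + D := e2
    rw [h1, h2] at h; exact h
  -- positivity facts
  have hAB : 0 < A + B := e6 ▸ hy1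
  have hCD : 0 < C + D := e2 ▸ hy0
  have hAC : 0 < A + C := e4 ▸ hδ1
  have hApos : 0 < A := by
    have := hPPV
    unfold cpr at this
    rw [e4] at this
    have hnum : 0 < pr P (fun ω => y ω = true ∧ δ ω = true ∧ a ω = g) := by
      by_contra h
      push_neg at h
      have h0 : pr P (fun ω => y ω = true ∧ δ ω = true ∧ a ω = g) = 0 :=
        le_antisymm h (pr_nonneg hP _)
      rw [h0] at this
      simp at this
    exact e3 ▸ hnum
  have hG : 0 < (A + B) + (C + D) := by linarith
  -- rewrite the goal
  unfold cpr
  rw [e1, e2, e3, e4, e5, e6, e7]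
  have h1mp : 1 - (A + B) / ((A + B) + (C + D)) = (C + D) / ((A + B) + (C + D)) := by
    field_simp
    ring
  rw [h1mp]
  field_simp
  ring
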